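/- Let k be a field of characteristic zero, B = k[X,Y,Z], D a nonzero locally nilpotent derivation on B, A = ker(D), r a local slice with D(r) = f ∈ A \ {0}. Let M₀ be an A-submodule of B with Σ_{i=0}^n A·r^i ⊆ M₀ ⊆ F_n, where F_n = {b ∈ B : deg_D(b) ≤ n}. If fB ∩ M₀ = fM₀, then F_n = M₀. -/
import Mathlib


/-- A derivation is locally nilpotent if every element is killed by some iterate. -/
def IsLND {k B : Type*} [CommRing k] [CommRing B] [Algebra k B]
    (D : Derivation k B B) : Prop :=
  ∀ b : B, ∃ n : ℕ, (⇑D)^[n] b = 0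

/-- `ndeg D b n` says that `n` is the `D`-degree of `b`, i.e. the largest `m` with
`D^[m] b ≠ 0`. -/
def ndeg {k B : Type*} [CommRing k] [CommRing B] [Algebra k B]
    (D : Derivation k B B) (b : B) (n : ℕ) : Prop :=
  (⇑D)^[n] b ≠ 0 ∧ (⇑D)^[n + 1] b = 0

/-- A derivation is irreducible if the ideal generated by its image is not contained
in any proper principal ideal. -/
def IsIrred {k B : Type*} [CommRing k] [CommRing B] [Algebra k B]
    (D : Derivation k B B) : Prop :=
  ∀ b : B, Ideal.span (Set.range (⇑D)) ≤ Ideal.span {b} → IsUnit b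

open MvPolynomial

/-- The Jacobian derivation `g ↦ ∂(f₁,f₂,g)/∂(X₀,X₁,X₂)` on `k[X₀,X₁,X₂]`. -/
noncomputable def jac {k : Type*} [CommRing k]
    (f₁ f₂ g : MvPolynomial (Fin 3) k) : MvPolynomial (Fin 3) k :=
  Matrix.det (Matrix.of fun i j => MvPolynomial.pderiv j (![f₁, f₂, g] i))

/-- `V 0, V 1, V 2` form a system of coordinates (variables) of `k[X₀,X₁,X₂]`. -/
def IsCoordSys {k : Type*} [CommRing k]
    (V : Fin 3 → MvPolynomial (Fin 3) k) : Prop :=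
  ∃ σ : MvPolynomial (Fin 3) k ≃ₐ[k] MvPolynomial (Fin 3) k,
    ∀ i, σ (X i) = V i

/-- `D` is homogeneous of degree `d` with respect to the standard grading. -/
def IsHomogDer {k : Type*} [CommRing k]
    (D : Derivation k (MvPolynomial (Fin 3) k) (MvPolynomial (Fin 3) k))
    (d : ℕ) : Prop :=
  ∀ (i : ℕ) (f : MvPolynomial (Fin 3) k),
    f.IsHomogeneous i → (D f).IsHomogeneous (i + d)

/-- `D` has rank 2: some coordinate system has its last variable in the kernel, but no
coordinate system has its last two variables in the kernel. -/
def HasRank2 {k : Type*} [CommRing k]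
    (D : Derivation k (MvPolynomial (Fin 3) k) (MvPolynomial (Fin 3) k)) : Prop :=
  (∃ V : Fin 3 → MvPolynomial (Fin 3) k, IsCoordSys V ∧ D (V 2) = 0) ∧
  ¬ (∃ V : Fin 3 → MvPolynomial (Fin 3) k, IsCoordSys V ∧ D (V 1) = 0 ∧ D (V 2) = 0)

/-- `D` is triangularizable: in some coordinate system `{X,Y,Z}` one has `D X ∈ k`,
`D Y ∈ k[X]`, `D Z ∈ k[X,Y]`. -/
def IsTriangularizable {k : Type*} [CommRing k]
    (D : Derivation k (MvPolynomial (Fin 3) k) (MvPolynomial (Fin 3) k)) : Prop :=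
  ∃ V : Fin 3 → MvPolynomial (Fin 3) k, IsCoordSys V ∧
    (∃ c : k, D (V 0) = C c) ∧
    D (V 1) ∈ Algebra.adjoin k ({V 0} : Set (MvPolynomial (Fin 3) k)) ∧
    D (V 2) ∈ Algebra.adjoin k ({V 0, V 1} : Set (MvPolynomial (Fin 3) k))

lemma rep_lemma {k : Type*} [Field k] [CharZero k]
    (D : Derivation k (MvPolynomial (Fin 3) k) (MvPolynomial (Fin 3) k))
    (r f : MvPolynomial (Fin 3) k) (hrf : D r = f) (hfA : D f = 0) :
    ∀ (m : ℕ) (b : MvPolynomial (Fin 3) k), (⇑D)^[m + 1] b = 0 →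
      ∃ (N : ℕ) (a : ℕ → MvPolynomial (Fin 3) k),
        (∀ i, D (a i) = 0) ∧ f ^ N * b = ∑ i ∈ Finset.range (m + 1), a i * r ^ i := by
  intro m
  induction m with
  | zero =>
    intro b hb
    exact ⟨0, fun _ => b, fun i => by simpa using hb, by simp⟩
  | succ m ih =>
    intro b hb
    obtain ⟨N, a, ha, hrep⟩ := ih (D b) (by
      rw [← Function.iterate_succ_apply]; exact hb)
    set g : MvPolynomial (Fin 3) k :=
      ∑ i ∈ Finset.range (m + 1), C (((i : k) + 1)⁻¹) * a i * r ^ (i + 1) with hg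
    have hconst : ∀ i : ℕ, D (C (((i : k) + 1)⁻¹) * a i) = 0 := by
      intro i
      rw [Derivation.leibniz, ha i, ← MvPolynomial.algebraMap_eq,
        Derivation.map_algebraMap]
      simp
    have hcancel : ∀ i : ℕ,
        (C (((i : k) + 1)⁻¹) : MvPolynomial (Fin 3) k) * ((i + 1 : ℕ) : MvPolynomial (Fin 3) k) = 1 := by
      intro i
      rw [← MvPolynomial.C_eq_coe_nat, ← C_mul]
      rw [show ((i + 1 : ℕ) : k) = (i : k) + 1 by push_cast; ring]
      rw [inv_mul_cancel₀ (Nat.cast_add_one_ne_zero i)]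
      simp
    have hDg : D g = f ^ N * D b * f := by
      rw [hg, map_sum, hrep, Finset.sum_mul]
      refine Finset.sum_congr rfl fun i _ => ?_
      rw [Derivation.leibniz, hconst i, Derivation.leibniz_pow, hrf]
      simp only [smul_zero, add_zero, Nat.add_sub_cancel, smul_eq_mul, nsmul_eq_mul, mul_zero, add_zero]
      calc C (((i : k) + 1)⁻¹) * a i * (((i + 1 : ℕ) : MvPolynomial (Fin 3) k) * (r ^ i * f))
          = (C (((i : k) + 1)⁻¹) * ((i + 1 : ℕ) : MvPolynomial (Fin 3) k)) * (a i * (r ^ i * f)) := by ring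
        _ = a i * r ^ i * f := by rw [hcancel i]; ring
    have hkey : D (f ^ (N + 1) * b - g) = 0 := by
      rw [map_sub, hDg, Derivation.leibniz, Derivation.leibniz_pow, hfA]
      simp only [smul_zero, smul_eq_mul]
      ring
    refine ⟨N + 1, fun j => match j with
      | 0 => f ^ (N + 1) * b - g
      | j + 1 => C (((j : k) + 1)⁻¹) * a j, fun i => ?_, ?_⟩
    · match i with
      | 0 => exact hkey
      | i + 1 => exact hconst i
    · rw [Finset.sum_range_succ']
      simp only [pow_zero, mul_one]
      rw [show (∑ i ∈ Finset.range (m + 1), C (((i : k) + 1)⁻¹) * a i * r ^ (i + 1)) = g from hg.symm]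
      ring

/-- Freudenburg's degree-module criterion (case `s = 0`): let `r` be a local slice
with `D r = f ∈ A \ {0}` (`A = ker D`), and let `M₀` be an `A`-submodule of `B`
with `Σ_{i=0}^n A r^i ⊆ M₀ ⊆ F_n`.  If `f B ∩ M₀ = f M₀`, then `F_n = M₀`. -/
theorem degree_module_criterion {k : Type*} [Field k] [CharZero k]
    (D : Derivation k (MvPolynomial (Fin 3) k) (MvPolynomial (Fin 3) k))
    (hD : D ≠ 0) (hlnd : IsLND D)
    (r f : MvPolynomial (Fin 3) k) (hrf : D r = f) (hf0 : f ≠ 0) (hfA : D f = 0)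
    (n : ℕ) (M₀ : Set (MvPolynomial (Fin 3) k))
    (hadd : ∀ x ∈ M₀, ∀ y ∈ M₀, x + y ∈ M₀)
    (hsmul : ∀ (a : MvPolynomial (Fin 3) k), D a = 0 → ∀ x ∈ M₀, a * x ∈ M₀)
    (hlow : ∀ (a : MvPolynomial (Fin 3) k), D a = 0 → ∀ i ≤ n, a * r ^ i ∈ M₀)
    (hup : ∀ x ∈ M₀, (⇑D)^[n + 1] x = 0)
    (hsat : ∀ x ∈ M₀, (∃ b, x = f * b) → ∃ y ∈ M₀, x = f * y) :
    {b : MvPolynomial (Fin 3) k | (⇑D)^[n + 1] b = 0} = M₀ := by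
  ext b
  simp only [Set.mem_setOf_eq]
  constructor
  · intro hb
    obtain ⟨N, a, ha, hrep⟩ := rep_lemma D r f hrf hfA n b hb
    have h0 : (0 : MvPolynomial (Fin 3) k) ∈ M₀ := by
      have := hlow 0 (map_zero D) 0 (Nat.zero_le n)
      simpa using this
    have hsum : f ^ N * b ∈ M₀ := by
      rw [hrep]
      refine Finset.sum_induction _ (· ∈ M₀) (fun x y hx hy => hadd x hx y hy) h0 ?_
      intro i hi
      exact hlow (a i) (ha i) i (Nat.lt_succ_iff.mp (Finset.mem_range.mp hi))
    have descent : ∀ (N : ℕ) (x : MvPolynomial (Fin 3) k), f ^ N * x ∈ M₀ → x ∈ M₀ := by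
      intro N
      induction N with
      | zero => intro x hx; simpa using hx
      | succ N ih =>
        intro x hx
        obtain ⟨y, hy, hxy⟩ := hsat (f ^ (N + 1) * x) hx ⟨f ^ N * x, by ring⟩
        have hcx : f ^ N * x = y := by
          apply mul_left_cancel₀ hf0
          rw [← hxy]; ring
        exact ih x (hcx ▸ hy)
    exact descent N b hsum
  · exact hup b
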